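/- Let d ∈ ℕ and define the symbols σ(x) = −1/(1+|x|²), σ_a(x) = −1/(1+a+|x|²) for a > 0, and σ̃_a(x) = −1/(a+|x|²) for a ≥ 2, all on ℝ^d. Then for every multi-index r and every ϑ ∈ [0,1] there exists a constant C = C(d, r, ϑ) > 0 such that for all x ∈ ℝ^d: (i) |D^r σ_a(x)| ≤ C a^{ϑ−1} (1+|x|)^{−2ϑ−|r|} for all a > 0; (ii) |D^r(σ_a − σ)(x)| ≤ C a^{ϑ} (1+|x|)^{−2−2ϑ−|r|} for all a > 0; (iii) |D^r σ̃_a(x)| ≤ C a^{ϑ−1} (1+|x|)^{−2ϑ−|r|} for all a ≥ 2; (iv) |D^r(σ̃_a − σ)(x)| ≤ C a^{ϑ} (1+|x|)^{−2−2ϑ−|r|} for all a ≥ 2. -/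

import Mathlib

noncomputable section

namespace S9
open Finset

variable {d : ℕ}

abbrev pr (d : ℕ) (i : Fin d) : (Fin d → ℝ) →L[ℝ] ℝ := ContinuousLinearMap.proj i

def L (d : ℕ) : (Fin d → ℝ) →L[ℝ] (Fin d → ℝ) →L[ℝ] ℝ :=
  ∑ i : Fin d, (pr d i).smulRight (pr d i)

def Q (d : ℕ) (y : Fin d → ℝ) : ℝ := ∑ i, y i ^ 2

lemma Q_nonneg (y : Fin d → ℝ) : 0 ≤ Q d y := Finset.sum_nonneg fun _ _ => sq_nonneg _

lemma L_apply (y w : Fin d → ℝ) : L d y w = ∑ i, y i * w i := by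
  simp [L, ContinuousLinearMap.sum_apply, mul_comm]

lemma abs_le_sqrtQ (x : Fin d → ℝ) (i : Fin d) : |x i| ≤ Real.sqrt (Q d x) := by
  rw [← Real.sqrt_sq_eq_abs]
  exact Real.sqrt_le_sqrt (Finset.single_le_sum (f := fun j => x j ^ 2)
    (fun j _ => sq_nonneg _) (Finset.mem_univ i))

lemma norm_L_apply_le (x : Fin d → ℝ) : ‖L d x‖ ≤ d * Real.sqrt (Q d x) := by
  refine ContinuousLinearMap.opNorm_le_bound _ (by positivity) fun w => ?_
  rw [L_apply]
  calc ‖∑ i, x i * w i‖ ≤ ∑ i, ‖x i * w i‖ := norm_sum_le _ _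
    _ ≤ ∑ _i : Fin d, Real.sqrt (Q d x) * ‖w‖ := by
        refine Finset.sum_le_sum fun i _ => ?_
        rw [norm_mul]
        exact mul_le_mul (abs_le_sqrtQ x i) (norm_le_pi_norm w i) (norm_nonneg _)
          (Real.sqrt_nonneg _)
    _ = d * Real.sqrt (Q d x) * ‖w‖ := by
        simp [mul_assoc, mul_comm]

lemma norm_L_le : ‖L d‖ ≤ d := by
  refine ContinuousLinearMap.opNorm_le_bound _ (by positivity) fun y => ?_
  refine ContinuousLinearMap.opNorm_le_bound _ (by positivity) fun w => ?_
  rw [L_apply]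
  calc ‖∑ i, y i * w i‖ ≤ ∑ i, ‖y i * w i‖ := norm_sum_le _ _
    _ ≤ ∑ _i : Fin d, ‖y‖ * ‖w‖ := by
        refine Finset.sum_le_sum fun i _ => ?_
        rw [norm_mul]
        exact mul_le_mul (norm_le_pi_norm y i) (norm_le_pi_norm w i) (norm_nonneg _)
          (norm_nonneg _)
    _ = d * ‖y‖ * ‖w‖ := by simp; ring

lemma hasFDerivAt_Q (x : Fin d → ℝ) : HasFDerivAt (Q d) ((2:ℝ) • L d x) x := by
  have hi : ∀ i : Fin d, HasFDerivAt (fun y : Fin d → ℝ => y i ^ 2)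
      (x i • pr d i + x i • pr d i) x := by
    intro i
    have h2 : (fun y : Fin d → ℝ => y i ^ 2) = fun y => y i * y i :=
      funext fun y => sq (y i)
    rw [h2]
    exact ((pr d i).hasFDerivAt (x := x)).mul ((pr d i).hasFDerivAt (x := x))
  have h : HasFDerivAt (Q d) (∑ i : Fin d, (x i • pr d i + x i • pr d i)) x :=
    HasFDerivAt.fun_sum fun i _ => hi i
  convert h using 1
  ext w
  simp [L_apply, Finset.mul_sum, Finset.sum_add_distrib]
  rw [← Finset.sum_add_distrib]
  exact Finset.sum_congr rfl fun i _ => by ring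

end S9

namespace S9
open Finset

lemma contDiff_Q {n : WithTop ℕ∞} : ContDiff ℝ n (Q d) :=
  ContDiff.sum (f := fun (i : Fin d) (y : Fin d → ℝ) => y i ^ 2)
    fun i _ => ((pr d i).contDiff).pow 2

lemma contDiff_invpow {n : WithTop ℕ∞} {b : ℝ} (m : ℕ)
    (hb : ∀ y : Fin d → ℝ, 0 < b + Q d y) :
    ContDiff ℝ n fun y : Fin d → ℝ => ((b + Q d y) ^ m)⁻¹ :=
  ((contDiff_const.add contDiff_Q).pow m).inv fun y => pow_ne_zero _ (hb y).ne'

lemma hasFDerivAt_invpow {b : ℝ} {m : ℕ} (hm : 1 ≤ m)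
    (hb : ∀ y : Fin d → ℝ, 0 < b + Q d y) (x : Fin d → ℝ) :
    HasFDerivAt (fun y : Fin d → ℝ => ((b + Q d y) ^ m)⁻¹)
      ((-(2 * (m:ℝ)) * ((b + Q d x) ^ (m+1))⁻¹) • L d x) x := by
  obtain ⟨k, rfl⟩ : ∃ k, m = k + 1 := ⟨m - 1, by omega⟩
  set s := b + Q d x with hs
  have hs0 : 0 < s := hb x
  have h1 : HasFDerivAt (fun y : Fin d → ℝ => b + Q d y) ((2:ℝ) • L d x) x :=
    (hasFDerivAt_Q x).const_add b
  have h2 : HasDerivAt (fun t : ℝ => (t ^ (k+1))⁻¹)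
      (-(((k:ℝ)+1) * s ^ k) / (s ^ (k+1)) ^ 2) s := by
    have := (hasDerivAt_pow (k+1) s).inv (pow_ne_zero _ hs0.ne')
    simp at this
    exact this
  have h3 := h2.comp_hasFDerivAt x h1
  refine h3.congr_fderiv ?_
  rw [smul_smul]
  congr 1
  have hne : s ≠ 0 := hs0.ne'
  field_simp
  push_cast
  ring

lemma fderiv_invpow {b : ℝ} {m : ℕ} (hm : 1 ≤ m)
    (hb : ∀ y : Fin d → ℝ, 0 < b + Q d y) :
    (fderiv ℝ fun y : Fin d → ℝ => ((b + Q d y) ^ m)⁻¹) =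
      fun x => (-(2 * (m:ℝ)) * ((b + Q d x) ^ (m+1))⁻¹) • L d x :=
  funext fun x => (hasFDerivAt_invpow hm hb x).fderiv

lemma norm_itfd_one_clm {E F : Type*} [NormedAddCommGroup E] [NormedSpace ℝ E]
    [NormedAddCommGroup F] [NormedSpace ℝ F] (A : E →L[ℝ] F) (x : E) :
    ‖iteratedFDeriv ℝ 1 (⇑A) x‖ = ‖A‖ := by
  rw [← norm_iteratedFDeriv_fderiv, norm_iteratedFDeriv_zero, A.fderiv]

lemma norm_itfd_clm_eq_zero {E F : Type*} [NormedAddCommGroup E] [NormedSpace ℝ E]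
    [NormedAddCommGroup F] [NormedSpace ℝ F] (A : E →L[ℝ] F) (x : E) {j : ℕ} (hj : 2 ≤ j) :
    ‖iteratedFDeriv ℝ j (⇑A) x‖ = 0 := by
  obtain ⟨k, rfl⟩ : ∃ k, j = k + 1 := ⟨j - 1, by omega⟩
  rw [← norm_iteratedFDeriv_fderiv]
  have hA : fderiv ℝ (⇑A) = fun _ : E => A := funext fun y => A.fderiv
  rw [hA, iteratedFDeriv_const_of_ne (by omega)]
  simp

end S9

namespace S9
open Finset

lemma one_add_sq_le (N : ℝ) (hN : 0 ≤ N) : (1 + N) ^ 2 ≤ 2 * (1 + N ^ 2) := by nlinarith [sq_nonneg (N - 1)]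

lemma core (d : ℕ) (hd : 0 < d) :
    ∀ r : ℕ, ∀ m : ℕ, 1 ≤ m → ∃ C : ℝ, 0 < C ∧ ∀ i ≤ r, ∀ b : ℝ, 1 ≤ b → ∀ x : Fin d → ℝ,
      ‖iteratedFDeriv ℝ i (fun y => ((b + Q d y) ^ m)⁻¹) x‖ ≤
        C * ((b + Q d x) ^ m)⁻¹ * ((1 + Real.sqrt (Q d x)) ^ i)⁻¹ := by
  intro r
  induction r with
  | zero =>
    intro m hm
    refine ⟨1, one_pos, ?_⟩
    intro i hi b hb x
    have hi0 : i = 0 := by omega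
    subst hi0
    have hs : 0 < b + Q d x := by have := Q_nonneg x; linarith
    rw [norm_iteratedFDeriv_zero]
    simp only [pow_zero, inv_one, mul_one, one_mul]
    rw [Real.norm_eq_abs, abs_of_pos (by positivity)]
  | succ r IH =>
    intro m hm
    obtain ⟨C₀, hC₀, h₀⟩ := IH m hm
    obtain ⟨C₁, hC₁, h₁⟩ := IH (m+1) (by omega)
    set K : ℝ := 2 * m * C₁ * d with hK
    have hKpos : 0 < K := by
      have : (0:ℝ) < d := by exact_mod_cast hd
      have : (0:ℝ) < m := by exact_mod_cast hm
      positivity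
    refine ⟨max C₀ (2 ^ (r+1) * K), lt_max_of_lt_left hC₀, ?_⟩
    intro i hi b hb x
    have hbQ : ∀ y : Fin d → ℝ, 0 < b + Q d y := fun y => by
      have := Q_nonneg (d := d) y; linarith
    set N : ℝ := Real.sqrt (Q d x) with hNdef
    have hN0 : 0 ≤ N := Real.sqrt_nonneg _
    have hs : 0 < b + Q d x := hbQ x
    have hNsq : N ^ 2 = Q d x := Real.sq_sqrt (Q_nonneg x)
    have h2s : (1 + N) ^ 2 ≤ 2 * (b + Q d x) := by
      have := one_add_sq_le N hN0
      nlinarith [Q_nonneg x]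
    have hpowpos : ∀ j : ℕ, (0:ℝ) < ((b + Q d x) ^ j)⁻¹ := fun j => by positivity
    have hNpos : (0:ℝ) < 1 + N := by linarith
    rcases Nat.lt_or_ge i (r+1) with hir | hir
    · -- case i ≤ r : use IH with larger constant
      refine le_trans (h₀ i (by omega) b hb x) ?_
      have : (0:ℝ) ≤ ((b + Q d x) ^ m)⁻¹ * ((1 + N) ^ i)⁻¹ := by positivity
      calc C₀ * ((b + Q d x) ^ m)⁻¹ * ((1 + N) ^ i)⁻¹
          = C₀ * (((b + Q d x) ^ m)⁻¹ * ((1 + N) ^ i)⁻¹) := by ring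
        _ ≤ max C₀ (2 ^ (r+1) * K) * (((b + Q d x) ^ m)⁻¹ * ((1 + N) ^ i)⁻¹) :=
            mul_le_mul_of_nonneg_right (le_max_left _ _) this
        _ = max C₀ (2 ^ (r+1) * K) * ((b + Q d x) ^ m)⁻¹ * ((1 + N) ^ i)⁻¹ := by ring
    · -- case i = r + 1
      have hi1 : i = r + 1 := by omega
      subst hi1
      -- rewrite as derivative of order r of the fderiv
      have key : ‖iteratedFDeriv ℝ (r+1) (fun y => ((b + Q d y) ^ m)⁻¹) x‖
          = ‖iteratedFDeriv ℝ r
              (fun y : Fin d → ℝ => (-(2 * (m:ℝ)) * ((b + Q d y) ^ (m+1))⁻¹) • L d y) x‖ := by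
        rw [← norm_iteratedFDeriv_fderiv, fderiv_invpow hm hbQ]
      rw [key]
      have hcf : ContDiff ℝ ((r : ℕ) : WithTop ℕ∞)
          (fun y : Fin d → ℝ => -(2 * (m:ℝ)) * ((b + Q d y) ^ (m+1))⁻¹) :=
        contDiff_const.mul (contDiff_invpow (m+1) hbQ)
      have hcg : ContDiff ℝ ((r : ℕ) : WithTop ℕ∞) (⇑(L d)) := (L d).contDiff
      refine le_trans (norm_iteratedFDeriv_smul_le hcf hcg x le_rfl) ?_
      -- bound each term of the Leibniz sum
      have hterm : ∀ j ∈ Finset.range (r+1),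
          (r.choose j : ℝ) * ‖iteratedFDeriv ℝ j
              (fun y : Fin d → ℝ => -(2 * (m:ℝ)) * ((b + Q d y) ^ (m+1))⁻¹) x‖ *
            ‖iteratedFDeriv ℝ (r - j) (⇑(L d)) x‖ ≤
          (r.choose j : ℝ) *
            (K * ((b + Q d x) ^ (m+1))⁻¹ * (((1 + N) ^ r)⁻¹ * (1 + N))) := by
        intro j hj
        have hjr : j ≤ r := Nat.lt_succ_iff.mp (Finset.mem_range.mp hj)
        have hsmul : (fun y : Fin d → ℝ => -(2 * (m:ℝ)) * ((b + Q d y) ^ (m+1))⁻¹)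
            = (-(2 * (m:ℝ))) • (fun y : Fin d → ℝ => ((b + Q d y) ^ (m+1))⁻¹) := by
          funext y; simp [Pi.smul_apply, smul_eq_mul]
        have hnormf : ‖iteratedFDeriv ℝ j
              (fun y : Fin d → ℝ => -(2 * (m:ℝ)) * ((b + Q d y) ^ (m+1))⁻¹) x‖
            = 2 * m * ‖iteratedFDeriv ℝ j (fun y : Fin d → ℝ => ((b + Q d y) ^ (m+1))⁻¹) x‖ := by
          rw [hsmul, iteratedFDeriv_const_smul_apply (contDiff_invpow (m+1) hbQ).contDiffAt]
          rw [norm_smul (-(2 * (m:ℝ)))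
            (iteratedFDeriv ℝ j (fun y : Fin d → ℝ => ((b + Q d y) ^ (m+1))⁻¹) x)]
          congr 1
          simp [abs_of_nonneg]
        have hA : ‖iteratedFDeriv ℝ j
              (fun y : Fin d → ℝ => -(2 * (m:ℝ)) * ((b + Q d y) ^ (m+1))⁻¹) x‖
            ≤ 2 * m * (C₁ * ((b + Q d x) ^ (m+1))⁻¹ * ((1 + N) ^ j)⁻¹) := by
          rw [hnormf]
          exact mul_le_mul_of_nonneg_left (h₁ j hjr b hb x) (by positivity)
        have hchoosepos : (0:ℝ) ≤ (r.choose j : ℝ) := by positivity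
        rcases hsub : r - j with _ | rj
        · -- r - j = 0, so j = r
          have hjr' : j = r := by omega
          subst hjr'
          rw [norm_iteratedFDeriv_zero]
          have hB : ‖L d x‖ ≤ d * (1 + N) := by
            refine le_trans (norm_L_apply_le x) ?_
            have : (0:ℝ) ≤ (d:ℝ) := by positivity
            nlinarith
          calc (j.choose j : ℝ) * ‖iteratedFDeriv ℝ j
                (fun y : Fin d → ℝ => -(2 * (m:ℝ)) * ((b + Q d y) ^ (m+1))⁻¹) x‖ * ‖L d x‖
              = (j.choose j : ℝ) * (‖iteratedFDeriv ℝ j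
                (fun y : Fin d → ℝ => -(2 * (m:ℝ)) * ((b + Q d y) ^ (m+1))⁻¹) x‖ * ‖L d x‖) := by
                ring
            _ ≤ (j.choose j : ℝ) * ((2 * m * (C₁ * ((b + Q d x) ^ (m+1))⁻¹ * ((1 + N) ^ j)⁻¹))
                  * ((d:ℝ) * (1 + N))) := by
                refine mul_le_mul_of_nonneg_left ?_ hchoosepos
                exact mul_le_mul hA hB (norm_nonneg _) (by positivity)
            _ = (j.choose j : ℝ) * (K * ((b + Q d x) ^ (m+1))⁻¹ * (((1 + N) ^ j)⁻¹ * (1 + N))) := by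
                rw [hK]; ring
        · rcases rj with _ | k
          · -- r - j = 1, so r = j + 1
            have hr1 : r = j + 1 := by omega
            subst hr1
            have hone : ‖iteratedFDeriv ℝ (0+1) (⇑(L d)) x‖ = ‖L d‖ := norm_itfd_one_clm _ _
            rw [hone]
            have hB : ‖L d‖ ≤ (d:ℝ) := norm_L_le
            calc ((j+1).choose j : ℝ) * ‖iteratedFDeriv ℝ j
                  (fun y : Fin d → ℝ => -(2 * (m:ℝ)) * ((b + Q d y) ^ (m+1))⁻¹) x‖ * ‖L d‖
                = ((j+1).choose j : ℝ) * (‖iteratedFDeriv ℝ j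
                  (fun y : Fin d → ℝ => -(2 * (m:ℝ)) * ((b + Q d y) ^ (m+1))⁻¹) x‖ * ‖L d‖) := by
                  ring
              _ ≤ ((j+1).choose j : ℝ) * ((2 * m * (C₁ * ((b + Q d x) ^ (m+1))⁻¹
                    * ((1 + N) ^ j)⁻¹)) * (d:ℝ)) := by
                  refine mul_le_mul_of_nonneg_left ?_ hchoosepos
                  exact mul_le_mul hA hB (ContinuousLinearMap.opNorm_nonneg _) (by positivity)
              _ = ((j+1).choose j : ℝ) * (K * ((b + Q d x) ^ (m+1))⁻¹
                    * (((1 + N) ^ (j+1))⁻¹ * (1 + N))) := by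
                  rw [hK, pow_succ, mul_inv]
                  field_simp
                  ring
          · -- r - j ≥ 2 : the derivative of L vanishes
            rw [norm_itfd_clm_eq_zero (L d) x (j := k+1+1) (by omega), mul_zero]
            positivity
      refine le_trans (Finset.sum_le_sum hterm) ?_
      rw [← Finset.sum_mul]
      have hchoose : ∑ j ∈ Finset.range (r+1), (r.choose j : ℝ) = 2 ^ r := by
        rw [← Nat.cast_sum]
        rw [Nat.sum_range_choose]
        norm_num
      rw [hchoose]
      -- final algebra
      have hfin : ((b + Q d x) ^ (m+1))⁻¹ * (((1 + N) ^ r)⁻¹ * (1 + N)) ≤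
          2 * (((b + Q d x) ^ m)⁻¹ * ((1 + N) ^ (r+1))⁻¹) := by
        have e1 : ((b + Q d x) ^ (m+1))⁻¹
            = ((b + Q d x) ^ m)⁻¹ * (b + Q d x)⁻¹ := by
          rw [pow_succ, mul_inv]
        have e2 : ((1 + N) ^ r)⁻¹ * (1 + N) = ((1 + N) ^ (r+1))⁻¹ * (1 + N) ^ 2 := by
          rw [pow_succ, mul_inv]
          field_simp
        rw [e1, e2]
        have hle : (b + Q d x)⁻¹ * (1 + N) ^ 2 ≤ 2 := by
          calc (b + Q d x)⁻¹ * (1 + N) ^ 2 ≤ (b + Q d x)⁻¹ * (2 * (b + Q d x)) :=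
              mul_le_mul_of_nonneg_left h2s (by positivity)
            _ = 2 := by field_simp
        calc ((b + Q d x) ^ m)⁻¹ * (b + Q d x)⁻¹ * (((1 + N) ^ (r+1))⁻¹ * (1 + N) ^ 2)
            = (((b + Q d x) ^ m)⁻¹ * ((1 + N) ^ (r+1))⁻¹) * ((b + Q d x)⁻¹ * (1 + N) ^ 2) := by
              ring
          _ ≤ (((b + Q d x) ^ m)⁻¹ * ((1 + N) ^ (r+1))⁻¹) * 2 :=
              mul_le_mul_of_nonneg_left hle (by positivity)
          _ = 2 * (((b + Q d x) ^ m)⁻¹ * ((1 + N) ^ (r+1))⁻¹) := by ring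
      calc (2:ℝ) ^ r * (K * ((b + Q d x) ^ (m+1))⁻¹ * (((1 + N) ^ r)⁻¹ * (1 + N)))
          = (2 ^ r * K) * (((b + Q d x) ^ (m+1))⁻¹ * (((1 + N) ^ r)⁻¹ * (1 + N))) := by ring
        _ ≤ (2 ^ r * K) * (2 * (((b + Q d x) ^ m)⁻¹ * ((1 + N) ^ (r+1))⁻¹)) :=
            mul_le_mul_of_nonneg_left hfin (by positivity)
        _ = (2 ^ (r+1) * K) * ((b + Q d x) ^ m)⁻¹ * ((1 + N) ^ (r+1))⁻¹ := by ring
        _ ≤ max C₀ (2 ^ (r+1) * K) * ((b + Q d x) ^ m)⁻¹ * ((1 + N) ^ (r+1))⁻¹ := by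
            have : (0:ℝ) ≤ ((b + Q d x) ^ m)⁻¹ * ((1 + N) ^ (r+1))⁻¹ := by positivity
            calc (2 ^ (r+1) * K) * ((b + Q d x) ^ m)⁻¹ * ((1 + N) ^ (r+1))⁻¹
                = (2 ^ (r+1) * K) * (((b + Q d x) ^ m)⁻¹ * ((1 + N) ^ (r+1))⁻¹) := by ring
              _ ≤ max C₀ (2 ^ (r+1) * K) * (((b + Q d x) ^ m)⁻¹ * ((1 + N) ^ (r+1))⁻¹) :=
                  mul_le_mul_of_nonneg_right (le_max_right _ _) this
              _ = _ := by ring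

end S9

namespace S9

lemma interp_base {s N ϑ : ℝ} (hN : 0 ≤ N) (hϑ0 : 0 ≤ ϑ) (hϑ1 : ϑ ≤ 1)
    (h2 : (1 + N) ^ 2 ≤ 2 * s) : s ^ (-ϑ) ≤ 2 * (1 + N) ^ (-(2 * ϑ)) := by
  have h1N : (0:ℝ) < 1 + N := by linarith
  have hs : (0:ℝ) < s := by nlinarith
  have key : (1 + N) ^ 2 / 2 ≤ s := by linarith
  have step1 : s ^ (-ϑ) ≤ ((1 + N) ^ 2 / 2) ^ (-ϑ) :=
    Real.rpow_le_rpow_of_nonpos (by positivity) key (neg_nonpos.mpr hϑ0)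
  have step2 : ((1 + N) ^ 2 / 2 : ℝ) ^ (-ϑ) = ((1 + N) ^ 2 : ℝ) ^ (-ϑ) * 2 ^ ϑ := by
    rw [Real.div_rpow (by positivity) (by norm_num)]
    rw [div_eq_mul_inv, ← Real.rpow_neg (by norm_num), neg_neg]
  have step3 : ((1 + N) ^ 2 : ℝ) ^ (-ϑ) = (1 + N) ^ (-(2 * ϑ)) := by
    rw [← Real.rpow_natCast (1 + N) 2, ← Real.rpow_mul h1N.le]
    congr 1
    push_cast
    ring
  have step4 : (2:ℝ) ^ ϑ ≤ 2 := by
    calc (2:ℝ) ^ ϑ ≤ (2:ℝ) ^ (1:ℝ) := Real.rpow_le_rpow_of_exponent_le one_le_two hϑ1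
      _ = 2 := Real.rpow_one 2
  calc s ^ (-ϑ) ≤ ((1 + N) ^ 2 / 2) ^ (-ϑ) := step1
    _ = (1 + N) ^ (-(2 * ϑ)) * 2 ^ ϑ := by rw [step2, step3]
    _ ≤ (1 + N) ^ (-(2 * ϑ)) * 2 :=
        mul_le_mul_of_nonneg_left step4 (Real.rpow_nonneg h1N.le _)
    _ = 2 * (1 + N) ^ (-(2 * ϑ)) := by ring

lemma pow_inv_eq_rpow {N : ℝ} (hN : 0 ≤ N) (r : ℕ) :
    ((1 + N) ^ r)⁻¹ = (1 + N) ^ (-(r:ℝ)) := by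
  have h1N : (0:ℝ) < 1 + N := by linarith
  rw [← Real.rpow_natCast (1 + N) r, ← Real.rpow_neg h1N.le]

lemma interp1 {a s N ϑ : ℝ} (r : ℕ) (ha : 0 < a) (hN : 0 ≤ N) (hϑ0 : 0 ≤ ϑ) (hϑ1 : ϑ ≤ 1)
    (has : a ≤ s) (h2 : (1 + N) ^ 2 ≤ 2 * s) :
    s⁻¹ * ((1 + N) ^ r)⁻¹ ≤ 2 * a ^ (ϑ - 1) * (1 + N) ^ (-(2 * ϑ) - (r:ℝ)) := by
  have hs : 0 < s := lt_of_lt_of_le ha has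
  have h1N : (0:ℝ) < 1 + N := by linarith
  have e1 : s⁻¹ = s ^ (ϑ - 1) * s ^ (-ϑ) := by
    rw [← Real.rpow_add hs, show ϑ - 1 + -ϑ = (-1:ℝ) by ring, Real.rpow_neg_one]
  have e2 : s ^ (ϑ - 1) ≤ a ^ (ϑ - 1) :=
    Real.rpow_le_rpow_of_nonpos ha has (by linarith)
  have e3 : s ^ (-ϑ) ≤ 2 * (1 + N) ^ (-(2 * ϑ)) := interp_base hN hϑ0 hϑ1 h2
  have e4 : (1 + N) ^ (-(2 * ϑ)) * (1 + N) ^ (-(r:ℝ)) = (1 + N) ^ (-(2 * ϑ) - (r:ℝ)) := by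
    rw [← Real.rpow_add h1N, sub_eq_add_neg]
  calc s⁻¹ * ((1 + N) ^ r)⁻¹ = s ^ (ϑ - 1) * s ^ (-ϑ) * (1 + N) ^ (-(r:ℝ)) := by
        rw [e1, pow_inv_eq_rpow hN r]
    _ ≤ (a ^ (ϑ - 1) * (2 * (1 + N) ^ (-(2 * ϑ)))) * (1 + N) ^ (-(r:ℝ)) := by
        refine mul_le_mul_of_nonneg_right ?_ (Real.rpow_nonneg h1N.le _)
        exact mul_le_mul e2 e3 (Real.rpow_nonneg hs.le _) (Real.rpow_nonneg ha.le _)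
    _ = 2 * a ^ (ϑ - 1) * ((1 + N) ^ (-(2 * ϑ)) * (1 + N) ^ (-(r:ℝ))) := by ring
    _ = 2 * a ^ (ϑ - 1) * (1 + N) ^ (-(2 * ϑ) - (r:ℝ)) := by rw [e4]

lemma interp2 {a A B N ϑ : ℝ} (r : ℕ) (ha : 0 < a) (hN : 0 ≤ N) (hϑ0 : 0 ≤ ϑ) (hϑ1 : ϑ ≤ 1)
    (haA : a ≤ A) (hA2 : (1 + N) ^ 2 ≤ 2 * A) (hB2 : (1 + N) ^ 2 ≤ 2 * B) :
    a * (A⁻¹ * B⁻¹ * ((1 + N) ^ r)⁻¹) ≤ 4 * a ^ ϑ * (1 + N) ^ (-2 - 2 * ϑ - (r:ℝ)) := by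
  have hA : 0 < A := lt_of_lt_of_le ha haA
  have h1N : (0:ℝ) < 1 + N := by linarith
  have hB : 0 < B := by nlinarith
  have ha1 : a ^ ϑ * a ^ (1 - ϑ) = a := by
    rw [← Real.rpow_add ha, show ϑ + (1 - ϑ) = (1:ℝ) by ring, Real.rpow_one]
  have k1 : a * A⁻¹ ≤ a ^ ϑ * (2 * (1 + N) ^ (-(2 * ϑ))) := by
    have e1 : a * A⁻¹ = a ^ ϑ * (a ^ (1 - ϑ) * A ^ (-(1:ℝ))) := by
      rw [Real.rpow_neg_one]
      conv_lhs => rw [← ha1]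
      ring
    have e2 : a ^ (1 - ϑ) ≤ A ^ (1 - ϑ) := Real.rpow_le_rpow ha.le haA (by linarith)
    have e3 : A ^ (1 - ϑ) * A ^ (-(1:ℝ)) = A ^ (-ϑ) := by
      rw [← Real.rpow_add hA, show 1 - ϑ + -1 = -ϑ by ring]
    have e4 : a ^ (1 - ϑ) * A ^ (-(1:ℝ)) ≤ A ^ (-ϑ) := by
      rw [← e3]
      exact mul_le_mul_of_nonneg_right e2 (Real.rpow_nonneg hA.le _)
    have e5 : A ^ (-ϑ) ≤ 2 * (1 + N) ^ (-(2 * ϑ)) := interp_base hN hϑ0 hϑ1 hA2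
    calc a * A⁻¹ = a ^ ϑ * (a ^ (1 - ϑ) * A ^ (-(1:ℝ))) := e1
      _ ≤ a ^ ϑ * (2 * (1 + N) ^ (-(2 * ϑ))) :=
        mul_le_mul_of_nonneg_left (le_trans e4 e5) (Real.rpow_nonneg ha.le _)
  have k2 : B⁻¹ ≤ 2 * (1 + N) ^ (-(2:ℝ)) := by
    have h := interp_base (s := B) (ϑ := 1) hN zero_le_one le_rfl (by simpa using hB2)
    rw [Real.rpow_neg_one] at h
    calc B⁻¹ ≤ 2 * (1 + N) ^ (-(2 * 1) : ℝ) := h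
      _ = 2 * (1 + N) ^ (-(2:ℝ)) := by norm_num
  have hP : ((1 + N) ^ r)⁻¹ = (1 + N) ^ (-(r:ℝ)) := pow_inv_eq_rpow hN r
  have efin : (1 + N) ^ (-(2 * ϑ)) * ((1 + N) ^ (-(2:ℝ)) * (1 + N) ^ (-(r:ℝ)))
      = (1 + N) ^ (-2 - 2 * ϑ - (r:ℝ)) := by
    rw [← Real.rpow_add h1N, ← Real.rpow_add h1N]
    congr 1
    ring
  calc a * (A⁻¹ * B⁻¹ * ((1 + N) ^ r)⁻¹)
      = (a * A⁻¹) * B⁻¹ * ((1 + N) ^ r)⁻¹ := by ring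
    _ ≤ (a ^ ϑ * (2 * (1 + N) ^ (-(2 * ϑ)))) * (2 * (1 + N) ^ (-(2:ℝ))) * ((1 + N) ^ r)⁻¹ := by
        refine mul_le_mul_of_nonneg_right ?_ (by positivity)
        refine mul_le_mul k1 k2 (by positivity) (by positivity)
    _ = 4 * a ^ ϑ * ((1 + N) ^ (-(2 * ϑ)) * ((1 + N) ^ (-(2:ℝ)) * (1 + N) ^ (-(r:ℝ)))) := by
        rw [hP]; ring
    _ = 4 * a ^ ϑ * (1 + N) ^ (-2 - 2 * ϑ - (r:ℝ)) := by rw [efin]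

end S9

namespace S9
open Finset

lemma part13 (d : ℕ) (hd : 0 < d) (r : ℕ) :
    ∃ C : ℝ, 0 < C ∧ ∀ ϑ : ℝ, 0 ≤ ϑ → ϑ ≤ 1 → ∀ a b : ℝ, 0 < a → 1 ≤ b → a ≤ b →
      ∀ x : Fin d → ℝ,
        ‖iteratedFDeriv ℝ r (fun y : Fin d → ℝ => -(b + ∑ i, y i ^ 2)⁻¹) x‖ ≤
          2 * C * a ^ (ϑ - 1) * (1 + Real.sqrt (∑ i, x i ^ 2)) ^ (-(2 * ϑ) - (r : ℝ)) := by
  obtain ⟨C, hC, h⟩ := core d hd r 1 le_rfl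
  refine ⟨C, hC, ?_⟩
  intro ϑ hϑ0 hϑ1 a b ha hb hab x
  have hbQ : ∀ y : Fin d → ℝ, 0 < b + Q d y := fun y => by
    have := Q_nonneg (d := d) y; linarith
  set N : ℝ := Real.sqrt (Q d x) with hNdef
  have hN0 : 0 ≤ N := Real.sqrt_nonneg _
  have hNsq : N ^ 2 = Q d x := Real.sq_sqrt (Q_nonneg x)
  have h2s : (1 + N) ^ 2 ≤ 2 * (b + Q d x) := by
    have := one_add_sq_le N hN0
    nlinarith
  have hfun : (fun y : Fin d → ℝ => -(b + ∑ i, y i ^ 2)⁻¹)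
      = -(fun y : Fin d → ℝ => ((b + Q d y) ^ 1)⁻¹) := by
    funext y
    simp [Q, pow_one]
  have hsqrt : Real.sqrt (∑ i, x i ^ 2) = N := by rw [hNdef]; simp [Q]
  rw [hfun, iteratedFDeriv_neg_apply, norm_neg, hsqrt]
  have h1 := h r le_rfl b hb x
  rw [pow_one] at h1
  refine le_trans h1 ?_
  have h2 : (b + Q d x)⁻¹ * ((1 + N) ^ r)⁻¹ ≤ 2 * a ^ (ϑ - 1) * (1 + N) ^ (-(2 * ϑ) - (r:ℝ)) :=
    interp1 r ha hN0 hϑ0 hϑ1 (le_trans hab (by have := Q_nonneg x; linarith)) h2s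
  calc C * (b + Q d x)⁻¹ * ((1 + N) ^ r)⁻¹
      = C * ((b + Q d x)⁻¹ * ((1 + N) ^ r)⁻¹) := by ring
    _ ≤ C * (2 * a ^ (ϑ - 1) * (1 + N) ^ (-(2 * ϑ) - (r:ℝ))) :=
        mul_le_mul_of_nonneg_left h2 hC.le
    _ = 2 * C * a ^ (ϑ - 1) * (1 + N) ^ (-(2 * ϑ) - (r:ℝ)) := by ring

lemma part24 (d : ℕ) (hd : 0 < d) (r : ℕ) :
    ∃ C : ℝ, 0 < C ∧ ∀ ϑ : ℝ, 0 ≤ ϑ → ϑ ≤ 1 → ∀ a b : ℝ, 0 < a → 1 ≤ b → a ≤ b → b - 1 ≤ a →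
      ∀ x : Fin d → ℝ,
        ‖iteratedFDeriv ℝ r
            (fun y : Fin d → ℝ => -(b + ∑ i, y i ^ 2)⁻¹ + (1 + ∑ i, y i ^ 2)⁻¹) x‖ ≤
          C * a ^ ϑ * (1 + Real.sqrt (∑ i, x i ^ 2)) ^ (-2 - 2 * ϑ - (r : ℝ)) := by
  obtain ⟨C, hC, h⟩ := core d hd r 1 le_rfl
  refine ⟨4 * 2 ^ r * C ^ 2, by positivity, ?_⟩
  intro ϑ hϑ0 hϑ1 a b ha hb hab hba x
  have hbQ : ∀ y : Fin d → ℝ, 0 < b + Q d y := fun y => by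
    have := Q_nonneg (d := d) y; linarith
  have h1Q : ∀ y : Fin d → ℝ, 0 < 1 + Q d y := fun y => by
    have := Q_nonneg (d := d) y; linarith
  set N : ℝ := Real.sqrt (Q d x) with hNdef
  have hN0 : 0 ≤ N := Real.sqrt_nonneg _
  have hNsq : N ^ 2 = Q d x := Real.sq_sqrt (Q_nonneg x)
  have hsqrt : Real.sqrt (∑ i, x i ^ 2) = N := by rw [hNdef]; simp [Q]
  have hA2 : (1 + N) ^ 2 ≤ 2 * (b + Q d x) := by
    have := one_add_sq_le N hN0; nlinarith
  have hB2 : (1 + N) ^ 2 ≤ 2 * (1 + Q d x) := by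
    have := one_add_sq_le N hN0; nlinarith
  have hfun : (fun y : Fin d → ℝ => -(b + ∑ i, y i ^ 2)⁻¹ + (1 + ∑ i, y i ^ 2)⁻¹)
      = (b - 1) • (fun y : Fin d → ℝ => ((b + Q d y) ^ 1)⁻¹ * ((1 + Q d y) ^ 1)⁻¹) := by
    funext y
    have h1 := hbQ y
    have h2 := h1Q y
    simp only [Q, Pi.smul_apply, smul_eq_mul, pow_one]
    rw [eq_comm]
    field_simp
    ring
  have hcAB : ContDiff ℝ ((r:ℕ) : WithTop ℕ∞)
      (fun y : Fin d → ℝ => ((b + Q d y) ^ 1)⁻¹ * ((1 + Q d y) ^ 1)⁻¹) :=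
    (contDiff_invpow 1 hbQ).mul (contDiff_invpow 1 h1Q)
  rw [hfun, iteratedFDeriv_const_smul_apply hcAB.contDiffAt]
  rw [norm_smul ((b:ℝ) - 1) (iteratedFDeriv ℝ r
    (fun y : Fin d → ℝ => ((b + Q d y) ^ 1)⁻¹ * ((1 + Q d y) ^ 1)⁻¹) x)]
  rw [Real.norm_eq_abs, abs_of_nonneg (by linarith)]
  have hleib := norm_iteratedFDeriv_mul_le (𝕜 := ℝ)
    (contDiff_invpow (b := b) 1 hbQ) (contDiff_invpow (b := 1) 1 h1Q) x
    (le_refl ((r:ℕ) : WithTop ℕ∞))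
  have hterm : ∀ j ∈ Finset.range (r+1),
      (r.choose j : ℝ) * ‖iteratedFDeriv ℝ j (fun y : Fin d → ℝ => ((b + Q d y) ^ 1)⁻¹) x‖ *
        ‖iteratedFDeriv ℝ (r - j) (fun y : Fin d → ℝ => ((1 + Q d y) ^ 1)⁻¹) x‖ ≤
      (r.choose j : ℝ) *
        (C ^ 2 * ((b + Q d x)⁻¹ * ((1 + Q d x)⁻¹ * ((1 + N) ^ r)⁻¹))) := by
    intro j hj
    have hjr : j ≤ r := Nat.lt_succ_iff.mp (Finset.mem_range.mp hj)
    have h1 := h j hjr b hb x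
    have h2 := h (r - j) (by omega) 1 le_rfl x
    rw [pow_one] at h1 h2
    have hpow : ((1 + N) ^ j)⁻¹ * ((1 + N) ^ (r - j))⁻¹ = ((1 + N) ^ r)⁻¹ := by
      rw [← mul_inv, ← pow_add, Nat.add_sub_cancel' hjr]
    calc (r.choose j : ℝ) * ‖iteratedFDeriv ℝ j (fun y : Fin d → ℝ => ((b + Q d y) ^ 1)⁻¹) x‖ *
          ‖iteratedFDeriv ℝ (r - j) (fun y : Fin d → ℝ => ((1 + Q d y) ^ 1)⁻¹) x‖
        = (r.choose j : ℝ) *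
            (‖iteratedFDeriv ℝ j (fun y : Fin d → ℝ => ((b + Q d y) ^ 1)⁻¹) x‖ *
             ‖iteratedFDeriv ℝ (r - j) (fun y : Fin d → ℝ => ((1 + Q d y) ^ 1)⁻¹) x‖) := by
          ring
      _ ≤ (r.choose j : ℝ) * ((C * (b + Q d x)⁻¹ * ((1 + N) ^ j)⁻¹) *
            (C * (1 + Q d x)⁻¹ * ((1 + N) ^ (r - j))⁻¹)) := by
          refine mul_le_mul_of_nonneg_left ?_ (by positivity)
          refine mul_le_mul h1 h2 (norm_nonneg _) ?_
          have hx1 := hbQ x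
          exact mul_nonneg (mul_nonneg hC.le (by positivity)) (by positivity)
      _ = (r.choose j : ℝ) * (C ^ 2 * ((b + Q d x)⁻¹ * ((1 + Q d x)⁻¹ *
            (((1 + N) ^ j)⁻¹ * ((1 + N) ^ (r - j))⁻¹)))) := by ring
      _ = (r.choose j : ℝ) *
            (C ^ 2 * ((b + Q d x)⁻¹ * ((1 + Q d x)⁻¹ * ((1 + N) ^ r)⁻¹))) := by rw [hpow]
  have hsum := le_trans hleib (Finset.sum_le_sum hterm)
  rw [← Finset.sum_mul] at hsum
  have hchoose : ∑ j ∈ Finset.range (r+1), (r.choose j : ℝ) = 2 ^ r := by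
    rw [← Nat.cast_sum, Nat.sum_range_choose]
    norm_num
  rw [hchoose] at hsum
  rw [hsqrt]
  have hstep : ((b:ℝ) - 1) * ‖iteratedFDeriv ℝ r
      (fun y : Fin d → ℝ => ((b + Q d y) ^ 1)⁻¹ * ((1 + Q d y) ^ 1)⁻¹) x‖ ≤
      (b - 1) * (2 ^ r * (C ^ 2 * ((b + Q d x)⁻¹ * ((1 + Q d x)⁻¹ * ((1 + N) ^ r)⁻¹)))) :=
    mul_le_mul_of_nonneg_left hsum (by linarith)
  refine le_trans hstep ?_
  have hfin : (b - 1) * ((b + Q d x)⁻¹ * ((1 + Q d x)⁻¹ * ((1 + N) ^ r)⁻¹)) ≤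
      4 * a ^ ϑ * (1 + N) ^ (-2 - 2 * ϑ - (r:ℝ)) := by
    have hmono : (b - 1) * ((b + Q d x)⁻¹ * ((1 + Q d x)⁻¹ * ((1 + N) ^ r)⁻¹)) ≤
        a * ((b + Q d x)⁻¹ * ((1 + Q d x)⁻¹ * ((1 + N) ^ r)⁻¹)) :=
      mul_le_mul_of_nonneg_right hba
        (mul_nonneg (inv_nonneg.mpr (hbQ x).le)
          (mul_nonneg (inv_nonneg.mpr (h1Q x).le) (by positivity)))
    refine le_trans hmono ?_
    have := interp2 (A := b + Q d x) (B := 1 + Q d x) r ha hN0 hϑ0 hϑ1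
      (le_trans hab (by have := Q_nonneg x; linarith)) hA2 hB2
    calc a * ((b + Q d x)⁻¹ * ((1 + Q d x)⁻¹ * ((1 + N) ^ r)⁻¹))
        = a * ((b + Q d x)⁻¹ * (1 + Q d x)⁻¹ * ((1 + N) ^ r)⁻¹) := by ring
      _ ≤ 4 * a ^ ϑ * (1 + N) ^ (-2 - 2 * ϑ - (r:ℝ)) := this
  calc (b - 1) * (2 ^ r * (C ^ 2 * ((b + Q d x)⁻¹ * ((1 + Q d x)⁻¹ * ((1 + N) ^ r)⁻¹))))
      = (2 ^ r * C ^ 2) * ((b - 1) * ((b + Q d x)⁻¹ * ((1 + Q d x)⁻¹ * ((1 + N) ^ r)⁻¹))) := by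
        ring
    _ ≤ (2 ^ r * C ^ 2) * (4 * a ^ ϑ * (1 + N) ^ (-2 - 2 * ϑ - (r:ℝ))) :=
        mul_le_mul_of_nonneg_left hfin (by positivity)
    _ = 4 * 2 ^ r * C ^ 2 * a ^ ϑ * (1 + N) ^ (-2 - 2 * ϑ - (r:ℝ)) := by ring

end S9



/-- resolvent symbol estimates: with `σ(x) = -1/(1+|x|²)`,
`σ_a(x) = -1/(1+a+|x|²)` and `σ̃_a(x) = -1/(a+|x|²)` on `ℝ^d`, for every derivative order `r`
and every `ϑ ∈ [0,1]` there is a constant `C` with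
(i) `|D^r σ_a(x)| ≤ C a^{ϑ-1} (1+|x|)^{-2ϑ-r}` for `a > 0`;
(ii) `|D^r (σ_a - σ)(x)| ≤ C a^{ϑ} (1+|x|)^{-2-2ϑ-r}` for `a > 0`;
(iii) `|D^r σ̃_a(x)| ≤ C a^{ϑ-1} (1+|x|)^{-2ϑ-r}` for `a ≥ 2`;
(iv) `|D^r (σ̃_a - σ)(x)| ≤ C a^{ϑ} (1+|x|)^{-2-2ϑ-r}` for `a ≥ 2`. -/
theorem statement9 (d : ℕ) (hd : 0 < d) (r : ℕ) (ϑ : ℝ) (hϑ : ϑ ∈ Set.Icc (0 : ℝ) 1) :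
    ∃ C : ℝ, 0 < C ∧
      (∀ a : ℝ, 0 < a → ∀ x : Fin d → ℝ,
        ‖iteratedFDeriv ℝ r (fun y : Fin d → ℝ => -(1 + a + ∑ i, y i ^ 2)⁻¹) x‖ ≤
          C * a ^ (ϑ - 1) * (1 + Real.sqrt (∑ i, x i ^ 2)) ^ (-(2 * ϑ) - (r : ℝ))) ∧
      (∀ a : ℝ, 0 < a → ∀ x : Fin d → ℝ,
        ‖iteratedFDeriv ℝ r
            (fun y : Fin d → ℝ => -(1 + a + ∑ i, y i ^ 2)⁻¹ + (1 + ∑ i, y i ^ 2)⁻¹) x‖ ≤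
          C * a ^ ϑ * (1 + Real.sqrt (∑ i, x i ^ 2)) ^ (-2 - 2 * ϑ - (r : ℝ))) ∧
      (∀ a : ℝ, 2 ≤ a → ∀ x : Fin d → ℝ,
        ‖iteratedFDeriv ℝ r (fun y : Fin d → ℝ => -(a + ∑ i, y i ^ 2)⁻¹) x‖ ≤
          C * a ^ (ϑ - 1) * (1 + Real.sqrt (∑ i, x i ^ 2)) ^ (-(2 * ϑ) - (r : ℝ))) ∧
      (∀ a : ℝ, 2 ≤ a → ∀ x : Fin d → ℝ,
        ‖iteratedFDeriv ℝ r
            (fun y : Fin d → ℝ => -(a + ∑ i, y i ^ 2)⁻¹ + (1 + ∑ i, y i ^ 2)⁻¹) x‖ ≤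
          C * a ^ ϑ * (1 + Real.sqrt (∑ i, x i ^ 2)) ^ (-2 - 2 * ϑ - (r : ℝ))) := by
  obtain ⟨hϑ0, hϑ1⟩ := hϑ
  obtain ⟨C1, hC1, h13⟩ := S9.part13 d hd r
  obtain ⟨C2, hC2, h24⟩ := S9.part24 d hd r
  refine ⟨2 * C1 + C2, by positivity, ?_, ?_, ?_, ?_⟩
  · intro a ha x
    refine le_trans (h13 ϑ hϑ0 hϑ1 a (1 + a) ha (by linarith) (by linarith) x) ?_
    have h1 : (0:ℝ) ≤ a ^ (ϑ - 1) := Real.rpow_nonneg ha.le _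
    have h2 : (0:ℝ) ≤ (1 + Real.sqrt (∑ i, x i ^ 2)) ^ (-(2 * ϑ) - (r : ℝ)) :=
      Real.rpow_nonneg (by positivity) _
    have : 2 * C1 ≤ 2 * C1 + C2 := by linarith
    exact mul_le_mul_of_nonneg_right (mul_le_mul_of_nonneg_right this h1) h2
  · intro a ha x
    refine le_trans (h24 ϑ hϑ0 hϑ1 a (1 + a) ha (by linarith) (by linarith) (by linarith) x) ?_
    have h1 : (0:ℝ) ≤ a ^ ϑ := Real.rpow_nonneg ha.le _
    have h2 : (0:ℝ) ≤ (1 + Real.sqrt (∑ i, x i ^ 2)) ^ (-2 - 2 * ϑ - (r : ℝ)) :=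
      Real.rpow_nonneg (by positivity) _
    have : C2 ≤ 2 * C1 + C2 := by linarith
    exact mul_le_mul_of_nonneg_right (mul_le_mul_of_nonneg_right this h1) h2
  · intro a ha x
    refine le_trans (h13 ϑ hϑ0 hϑ1 a a (by linarith) (by linarith) le_rfl x) ?_
    have h1 : (0:ℝ) ≤ a ^ (ϑ - 1) := Real.rpow_nonneg (by linarith) _
    have h2 : (0:ℝ) ≤ (1 + Real.sqrt (∑ i, x i ^ 2)) ^ (-(2 * ϑ) - (r : ℝ)) :=
      Real.rpow_nonneg (by positivity) _
    have : 2 * C1 ≤ 2 * C1 + C2 := by linarith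
    exact mul_le_mul_of_nonneg_right (mul_le_mul_of_nonneg_right this h1) h2
  · intro a ha x
    refine le_trans (h24 ϑ hϑ0 hϑ1 a a (by linarith) (by linarith) le_rfl (by linarith) x) ?_
    have h1 : (0:ℝ) ≤ a ^ ϑ := Real.rpow_nonneg (by linarith) _
    have h2 : (0:ℝ) ≤ (1 + Real.sqrt (∑ i, x i ^ 2)) ^ (-2 - 2 * ϑ - (r : ℝ)) :=
      Real.rpow_nonneg (by positivity) _
    have : C2 ≤ 2 * C1 + C2 := by linarith
    exact mul_le_mul_of_nonneg_right (mul_le_mul_of_nonneg_right this h1) h2
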